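/- Let q > 0 be real and, for k = (k₁,k₂,k₃) ∈ ℝ³, let H_q(k) be the 2×2 complex matrix with entries H₁₁ = 4+q, H₁₂ = −1−e^{ik₁}−e^{ik₂}−e^{ik₃}, H₂₁ = −1−e^{−ik₁}−e^{−ik₂}−e^{−ik₃}, H₂₂ = 4−q. Then for every k ∈ ℝ³ the spectrum (over ℂ) of H_q(k) equals {4 − √(g(k)+q²), 4 + √(g(k)+q²)} where g(k) = |1+e^{ik₁}+e^{ik₂}+e^{ik₃}|², and ⋃_{k ∈ (−π,π]³} spectrum(H_q(k)) = [4−√(16+q²), 4−q] ∪ [4+q, 4+√(16+q²)] (real intervals regarded as subsets of ℂ). -/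

import Mathlib

open scoped Real

/-- The diamond-lattice symbol `g(k) = |1 + e^{ik₁} + e^{ik₂} + e^{ik₃}|²`. -/
noncomputable def diamondSymbol (k₁ k₂ k₃ : ℝ) : ℝ :=
  ‖1 + Complex.exp (Complex.I * k₁) + Complex.exp (Complex.I * k₂) +
    Complex.exp (Complex.I * k₃)‖ ^ 2

/-- The Floquet matrix of the Schrödinger operator on the diamond lattice with
potential `±q` on the two fundamental vertices. -/
noncomputable def diamondFloquet (q k₁ k₂ k₃ : ℝ) : Matrix (Fin 2) (Fin 2) ℂ :=
  !![((4 + q : ℝ) : ℂ),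
     -1 - Complex.exp (Complex.I * k₁) - Complex.exp (Complex.I * k₂) -
       Complex.exp (Complex.I * k₃);
     -1 - Complex.exp (-(Complex.I * k₁)) - Complex.exp (-(Complex.I * k₂)) -
       Complex.exp (-(Complex.I * k₃)), ((4 - q : ℝ) : ℂ)]

lemma exp_neg_conj (k : ℝ) :
    Complex.exp (-(Complex.I * k)) = starRingEnd ℂ (Complex.exp (Complex.I * k)) := by
  rw [← Complex.exp_conj]
  congr 1
  simp [Complex.conj_I]

lemma prod_eq (k₁ k₂ k₃ : ℝ) :
    (-1 - Complex.exp (Complex.I * k₁) - Complex.exp (Complex.I * k₂) -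
       Complex.exp (Complex.I * k₃)) *
    (-1 - Complex.exp (-(Complex.I * k₁)) - Complex.exp (-(Complex.I * k₂)) -
       Complex.exp (-(Complex.I * k₃))) = (diamondSymbol k₁ k₂ k₃ : ℂ) := by
  set E := 1 + Complex.exp (Complex.I * k₁) + Complex.exp (Complex.I * k₂) +
    Complex.exp (Complex.I * k₃) with hE
  have h1 : -1 - Complex.exp (Complex.I * k₁) - Complex.exp (Complex.I * k₂) -
      Complex.exp (Complex.I * k₃) = -E := by rw [hE]; ring
  have h2 : -1 - Complex.exp (-(Complex.I * k₁)) - Complex.exp (-(Complex.I * k₂)) -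
      Complex.exp (-(Complex.I * k₃)) = -(starRingEnd ℂ E) := by
    rw [exp_neg_conj, exp_neg_conj, exp_neg_conj, hE]
    simp only [map_add, map_one, map_neg, map_sub]
    ring
  rw [h1, h2, neg_mul_neg, Complex.mul_conj, diamondSymbol]
  push_cast
  rw [← hE, ← Complex.sq_norm]
  push_cast
  ring

lemma spec_eq (q k₁ k₂ k₃ : ℝ) :
    spectrum ℂ (diamondFloquet q k₁ k₂ k₃) =
      {((4 - Real.sqrt (diamondSymbol k₁ k₂ k₃ + q^2) : ℝ) : ℂ),
       ((4 + Real.sqrt (diamondSymbol k₁ k₂ k₃ + q^2) : ℝ) : ℂ)} := by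
  set g := diamondSymbol k₁ k₂ k₃ with hg
  have hg0 : 0 ≤ g := sq_nonneg _
  set s := Real.sqrt (g + q^2) with hs
  have hs2 : (s:ℂ)^2 = (g:ℂ) + (q:ℂ)^2 := by
    have h : s^2 = g + q^2 := Real.sq_sqrt (by positivity)
    exact_mod_cast congrArg (Complex.ofReal) h
  ext z
  rw [spectrum.mem_iff, Matrix.isUnit_iff_isUnit_det, isUnit_iff_ne_zero, not_ne_iff]
  have hM : algebraMap ℂ (Matrix (Fin 2) (Fin 2) ℂ) z - diamondFloquet q k₁ k₂ k₃ =
      !![z - (4+q), 1 + Complex.exp (Complex.I * k₁) + Complex.exp (Complex.I * k₂) +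
           Complex.exp (Complex.I * k₃);
         1 + Complex.exp (-(Complex.I * k₁)) + Complex.exp (-(Complex.I * k₂)) +
           Complex.exp (-(Complex.I * k₃)), z - (4-q)] := by
    ext i j
    fin_cases i <;> fin_cases j <;>
      simp [diamondFloquet, Matrix.algebraMap_matrix_apply] <;> push_cast <;> ring
  have hdet : (algebraMap ℂ (Matrix (Fin 2) (Fin 2) ℂ) z - diamondFloquet q k₁ k₂ k₃).det
      = (z - (4-s)) * (z - (4+s)) := by
    rw [hM, Matrix.det_fin_two_of]
    have h := prod_eq k₁ k₂ k₃
    push_cast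
    linear_combination -h + hs2
  rw [hdet, mul_eq_zero, sub_eq_zero, sub_eq_zero]
  simp only [Set.mem_insert_iff, Set.mem_singleton_iff]
  push_cast
  tauto

lemma hexp (k : ℝ) : Complex.exp (Complex.I * k) =
    ((Real.cos k : ℂ) + (Real.sin k : ℂ) * Complex.I) := by
  rw [mul_comm, Complex.exp_mul_I, ← Complex.ofReal_cos, ← Complex.ofReal_sin]

lemma hpi : Complex.exp (Complex.I * (π : ℝ)) = -1 := by
  rw [mul_comm]; exact_mod_cast Complex.exp_pi_mul_I

lemma symbol_kpp (k : ℝ) : diamondSymbol k π π = 2 - 2 * Real.cos k := by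
  rw [diamondSymbol, hpi, hexp, Complex.sq_norm]
  have h : (1 : ℂ) + ((Real.cos k : ℂ) + (Real.sin k : ℂ) * Complex.I) + -1 + -1
      = ((Real.cos k - 1 : ℝ) : ℂ) + ((Real.sin k : ℝ) : ℂ) * Complex.I := by
    push_cast; ring
  rw [h, Complex.normSq_add_mul_I]
  nlinarith [Real.sin_sq_add_cos_sq k]

lemma symbol_kkk (k : ℝ) : diamondSymbol k k k = 10 + 6 * Real.cos k := by
  rw [diamondSymbol, hexp, Complex.sq_norm]
  have h : (1 : ℂ) + ((Real.cos k : ℂ) + (Real.sin k : ℂ) * Complex.I)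
      + ((Real.cos k : ℂ) + (Real.sin k : ℂ) * Complex.I)
      + ((Real.cos k : ℂ) + (Real.sin k : ℂ) * Complex.I)
      = ((1 + 3 * Real.cos k : ℝ) : ℂ) + ((3 * Real.sin k : ℝ) : ℂ) * Complex.I := by
    push_cast; ring
  rw [h, Complex.normSq_add_mul_I]
  nlinarith [Real.sin_sq_add_cos_sq k]

lemma symbol_le (k₁ k₂ k₃ : ℝ) : diamondSymbol k₁ k₂ k₃ ≤ 16 := by
  have h : ∀ k : ℝ, ‖Complex.exp (Complex.I * k)‖ = 1 := by
    intro k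
    rw [Complex.norm_exp]
    simp
  have hb : ‖1 + Complex.exp (Complex.I * k₁) + Complex.exp (Complex.I * k₂) +
      Complex.exp (Complex.I * k₃)‖ ≤ 4 := by
    calc ‖1 + Complex.exp (Complex.I * k₁) + Complex.exp (Complex.I * k₂) +
        Complex.exp (Complex.I * k₃)‖
        ≤ ‖1 + Complex.exp (Complex.I * k₁) + Complex.exp (Complex.I * k₂)‖ +
          ‖Complex.exp (Complex.I * k₃)‖ := norm_add_le _ _
      _ ≤ (‖1 + Complex.exp (Complex.I * k₁)‖ +
          ‖Complex.exp (Complex.I * k₂)‖) +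
          ‖Complex.exp (Complex.I * k₃)‖ := by
            gcongr; exact norm_add_le _ _
      _ ≤ ((‖(1:ℂ)‖ + ‖Complex.exp (Complex.I * k₁)‖) +
          ‖Complex.exp (Complex.I * k₂)‖) +
          ‖Complex.exp (Complex.I * k₃)‖ := by
            gcongr; exact norm_add_le _ _
      _ = 4 := by rw [h, h, h]; norm_num
  have h0 : (0:ℝ) ≤ ‖1 + Complex.exp (Complex.I * k₁) + Complex.exp (Complex.I * k₂) +
      Complex.exp (Complex.I * k₃)‖ := norm_nonneg _
  rw [diamondSymbol]
  nlinarith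

lemma symbol_surj (t : ℝ) (ht0 : 0 ≤ t) (ht16 : t ≤ 16) :
    ∃ k₁ ∈ Set.Ioc (-π) π, ∃ k₂ ∈ Set.Ioc (-π) π, ∃ k₃ ∈ Set.Ioc (-π) π,
      diamondSymbol k₁ k₂ k₃ = t := by
  have hpi_mem : π ∈ Set.Ioc (-π) π := ⟨by linarith [Real.pi_pos], le_refl _⟩
  have harccos_mem : ∀ x : ℝ, Real.arccos x ∈ Set.Ioc (-π) π := fun x =>
    ⟨lt_of_lt_of_le (by linarith [Real.pi_pos]) (Real.arccos_nonneg x), Real.arccos_le_pi x⟩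
  by_cases h4 : t ≤ 4
  · refine ⟨Real.arccos ((2 - t)/2), harccos_mem _, π, hpi_mem, π, hpi_mem, ?_⟩
    rw [symbol_kpp, Real.cos_arccos (by linarith) (by linarith)]
    ring
  · refine ⟨Real.arccos ((t - 10)/6), harccos_mem _, Real.arccos ((t - 10)/6), harccos_mem _,
      Real.arccos ((t - 10)/6), harccos_mem _, ?_⟩
    rw [symbol_kkk, Real.cos_arccos (by linarith) (by linarith)]
    ring

/-- the spectrum of the diamond Floquet matrix is
`{4 − √(g(k)+q²), 4 + √(g(k)+q²)}`, and the union over the Brillouin zone `(−π,π]³` is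
`[4−√(16+q²), 4−q] ∪ [4+q, 4+√(16+q²)]`. -/
theorem stmt_18 (q : ℝ) (hq : 0 < q) :
    (∀ k₁ k₂ k₃ : ℝ, spectrum ℂ (diamondFloquet q k₁ k₂ k₃) =
      {((4 - Real.sqrt (diamondSymbol k₁ k₂ k₃ + q^2) : ℝ) : ℂ),
       ((4 + Real.sqrt (diamondSymbol k₁ k₂ k₃ + q^2) : ℝ) : ℂ)}) ∧
    (⋃ k₁ ∈ Set.Ioc (-π) π, ⋃ k₂ ∈ Set.Ioc (-π) π, ⋃ k₃ ∈ Set.Ioc (-π) π,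
        spectrum ℂ (diamondFloquet q k₁ k₂ k₃)) =
      (fun x : ℝ => (x : ℂ)) ''
        (Set.Icc (4 - Real.sqrt (16 + q^2)) (4 - q) ∪
         Set.Icc (4 + q) (4 + Real.sqrt (16 + q^2))) := by
  have h16 : (0:ℝ) ≤ 16 + q^2 := by positivity
  refine ⟨fun k₁ k₂ k₃ => spec_eq q k₁ k₂ k₃, ?_⟩
  ext z
  simp only [Set.mem_iUnion, Set.mem_image, Set.mem_union, Set.mem_Icc]
  constructor
  · rintro ⟨k₁, hk₁, k₂, hk₂, k₃, hk₃, hz⟩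
    rw [spec_eq] at hz
    simp only [Set.mem_insert_iff, Set.mem_singleton_iff] at hz
    have hg0 : 0 ≤ diamondSymbol k₁ k₂ k₃ := sq_nonneg _
    have hg16 : diamondSymbol k₁ k₂ k₃ ≤ 16 := symbol_le _ _ _
    set s := Real.sqrt (diamondSymbol k₁ k₂ k₃ + q^2) with hs
    have hsq : q ≤ s := by
      rw [hs, show q = Real.sqrt (q^2) from (Real.sqrt_sq hq.le).symm]
      exact Real.sqrt_le_sqrt (by rw [Real.sqrt_sq hq.le]; linarith)
    have hs16 : s ≤ Real.sqrt (16 + q^2) := Real.sqrt_le_sqrt (by linarith)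
    rcases hz with hz | hz
    · exact ⟨4 - s, Or.inl ⟨by linarith, by linarith⟩, hz.symm⟩
    · exact ⟨4 + s, Or.inr ⟨by linarith, by linarith⟩, hz.symm⟩
  · rintro ⟨x, hx | hx, rfl⟩
    · set s := 4 - x with hsdef
      have hsq : q ≤ s := by simp [hsdef]; linarith [hx.2]
      have hs16 : s ≤ Real.sqrt (16 + q^2) := by simp [hsdef]; linarith [hx.1]
      have hs0 : 0 ≤ s := le_trans hq.le hsq
      have ht0 : 0 ≤ s^2 - q^2 := by nlinarith
      have ht16 : s^2 - q^2 ≤ 16 := by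
        nlinarith [Real.sq_sqrt h16, Real.sqrt_nonneg (16 + q^2)]
      obtain ⟨k₁, hk₁, k₂, hk₂, k₃, hk₃, hgk⟩ := symbol_surj (s^2 - q^2) ht0 ht16
      refine ⟨k₁, hk₁, k₂, hk₂, k₃, hk₃, ?_⟩
      rw [spec_eq]
      have hsv : Real.sqrt (diamondSymbol k₁ k₂ k₃ + q^2) = s := by
        rw [hgk, show s^2 - q^2 + q^2 = s^2 by ring, Real.sqrt_sq hs0]
      left
      rw [hsv, hsdef]
      norm_num
    · set s := x - 4 with hsdef
      have hsq : q ≤ s := by simp [hsdef]; linarith [hx.1]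
      have hs16 : s ≤ Real.sqrt (16 + q^2) := by simp [hsdef]; linarith [hx.2]
      have hs0 : 0 ≤ s := le_trans hq.le hsq
      have ht0 : 0 ≤ s^2 - q^2 := by nlinarith
      have ht16 : s^2 - q^2 ≤ 16 := by
        nlinarith [Real.sq_sqrt h16, Real.sqrt_nonneg (16 + q^2)]
      obtain ⟨k₁, hk₁, k₂, hk₂, k₃, hk₃, hgk⟩ := symbol_surj (s^2 - q^2) ht0 ht16
      refine ⟨k₁, hk₁, k₂, hk₂, k₃, hk₃, ?_⟩
      rw [spec_eq]
      have hsv : Real.sqrt (diamondSymbol k₁ k₂ k₃ + q^2) = s := by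
        rw [hgk, show s^2 - q^2 + q^2 = s^2 by ring, Real.sqrt_sq hs0]
      right
      rw [hsv, hsdef]
      norm_num
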